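/- Suppose X ∈ S^n_+(ℤ) and rank(X) = 1 (as a real matrix). Then X = λ · x xᵀ for some integer vector x ∈ ℤⁿ and some integer λ ≥ 1. -/

import Mathlib

open Matrix Pointwise

/-- The gcd of a finite family of integers lies in the ideal spanned by its values. -/
lemma finset_gcd_mem_span_aux {ι : Type*} (s : Finset ι) (f : ι → ℤ) :
    (s.gcd f : ℤ) ∈ Ideal.span (f '' ↑s) := by
  classical
  induction s using Finset.induction_on with
  | empty => simp
  | @insert a s ha ih =>
    rw [Finset.gcd_insert]
    have hsub : (f '' ↑s : Set ℤ) ⊆ f '' ↑(insert a s) := by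
      apply Set.image_mono
      intro z hz; simp_all [Finset.mem_insert]
    have hle : Ideal.span ({f a, s.gcd f} : Set ℤ) ≤ Ideal.span (f '' ↑(insert a s)) := by
      rw [Ideal.span_le]
      rintro z hz
      rcases hz with rfl | rfl
      · exact Ideal.subset_span ⟨a, by simp, rfl⟩
      · exact Ideal.span_mono hsub ih
    have hmem : GCDMonoid.gcd (f a) (s.gcd f) ∈ Ideal.span ({f a, s.gcd f} : Set ℤ) := by
      rw [← span_gcd]
      exact Ideal.subset_span rfl
    exact hle hmem

/-- An integer PSD matrix of (real) rank one has the form `λ · x xᵀ`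
with `x ∈ ℤⁿ` and `λ ∈ ℤ`, `λ ≥ 1`. -/
theorem psd_int_rank_one_eq_smul_vecMulVec
    (n : ℕ) (X : Matrix (Fin n) (Fin n) ℤ)
    (hX : (X.map (Int.cast : ℤ → ℝ)).PosSemidef)
    (hrank : (X.map (Int.cast : ℤ → ℝ)).rank = 1) :
    ∃ (x : Fin n → ℤ) (lam : ℤ), 1 ≤ lam ∧ X = lam • Matrix.vecMulVec x x := by
  classical
  have hXne : X ≠ 0 := by
    rintro rfl
    rw [Matrix.map_zero _ Int.cast_zero, Matrix.rank_zero] at hrank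
    exact absurd hrank (by norm_num)
  set A := X.map (Int.cast : ℤ → ℝ) with hAdef
  -- symmetry of X
  have hsym : ∀ i j, X i j = X j i := by
    intro i j
    have h := hX.isHermitian.apply i j
    have h' : ((X i j : ℝ)) = ((X j i : ℝ)) := by
      simpa [hAdef, Matrix.map_apply] using h.symm
    exact_mod_cast h'
  -- rank-one representation over ℝ
  rw [Matrix.rank] at hrank
  obtain ⟨v, hv0, hv⟩ := finrank_eq_one_iff'.mp hrank
  have hcolmem : ∀ j, Aᵀ j ∈ LinearMap.range A.mulVecLin := by
    intro j
    exact ⟨Pi.single j 1, by rw [Matrix.mulVecLin_apply, Matrix.mulVec_single_one]; rfl⟩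
  choose c hc using fun j => hv ⟨Aᵀ j, hcolmem j⟩
  have hrep : ∀ i j, A i j = c j * (v : Fin n → ℝ) i := by
    intro i j
    have := congrFun (congrArg Subtype.val (hc j)) i
    simpa using this.symm
  have keyR : ∀ i j k l, A i j * A k l = A i l * A k j := by
    intro i j k l
    rw [hrep, hrep, hrep, hrep]; ring
  -- minor identity over ℤ
  have key : ∀ i j k l, X i j * X k l = X i l * X k j := by
    intro i j k l
    have h := keyR i j k l
    have h' : ((X i j * X k l : ℤ) : ℝ) = ((X i l * X k j : ℤ) : ℝ) := by
      push_cast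
      simpa [hAdef, Matrix.map_apply] using h
    exact_mod_cast h'
  -- find a nonzero entry
  obtain ⟨i0, j0, hij0⟩ : ∃ i j, X i j ≠ 0 := by
    by_contra h
    push_neg at h
    exact hXne (by ext i j; simpa using h i j)
  -- positive diagonal entry
  have hdiag_nn : (0 : ℤ) ≤ X i0 i0 := by
    have h := hX.dotProduct_mulVec_nonneg (Pi.single i0 1)
    have h' : (0 : ℝ) ≤ (X i0 i0 : ℝ) := by
      simpa [hAdef, Matrix.map_apply, dotProduct, Matrix.mulVec_single,
        Pi.single_apply, Finset.sum_ite_eq', mul_comm] using h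
    exact_mod_cast h'
  have hdne : X i0 i0 ≠ 0 := by
    intro h0
    have hk := key i0 j0 j0 i0
    rw [hsym j0 i0] at hk
    have hk2 : X i0 j0 * X i0 j0 = X i0 i0 * X j0 j0 := by linarith [hk]
    rw [h0, zero_mul] at hk2
    exact hij0 (by nlinarith [sq_nonneg (X i0 j0)])
  have hdpos : 0 < X i0 i0 := lt_of_le_of_ne hdiag_nn (Ne.symm hdne)
  set lam' := X i0 i0 with hlam'
  set x : Fin n → ℤ := fun j => X i0 j with hx
  have hkey : ∀ i j, lam' * X i j = x i * x j := by
    intro i j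
    have h := key i0 i0 i j
    rw [hsym i i0] at h
    simpa [hx, hlam', mul_comm] using h
  -- extract the gcd
  set d : ℤ := Finset.univ.gcd x with hd
  obtain ⟨y, hy, hgy⟩ := Finset.extract_gcd x ⟨i0, Finset.mem_univ i0⟩
  have hdne0 : d ≠ 0 := by
    intro h0
    have := Finset.gcd_eq_zero_iff.mp h0 i0 (Finset.mem_univ i0)
    exact hdne this
  -- λ' divides d²
  have hdvd : lam' ∣ d * d := by
    have hdmem : d ∈ Ideal.span (x '' ↑(Finset.univ : Finset (Fin n))) :=
      finset_gcd_mem_span_aux _ x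
    have hmul : d * d ∈ Ideal.span (x '' ↑(Finset.univ : Finset (Fin n))) *
        Ideal.span (x '' ↑(Finset.univ : Finset (Fin n))) :=
      Ideal.mul_mem_mul hdmem hdmem
    rw [Ideal.span_mul_span'] at hmul
    have hle : Ideal.span ((x '' ↑(Finset.univ : Finset (Fin n))) *
        (x '' ↑(Finset.univ : Finset (Fin n)))) ≤ Ideal.span {lam'} := by
      rw [Ideal.span_le]
      rintro z ⟨a, ha, b, hb, rfl⟩
      obtain ⟨i, -, rfl⟩ := ha
      obtain ⟨j, -, rfl⟩ := hb
      rw [SetLike.mem_coe, Ideal.mem_span_singleton]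
      exact ⟨X i j, (hkey i j).symm⟩
    exact Ideal.mem_span_singleton.mp (hle hmul)
  obtain ⟨lam, hlam⟩ := hdvd
  have hddpos : 0 < d * d := by
    rcases lt_or_gt_of_ne hdne0 with h | h
    · nlinarith
    · nlinarith
  have hlampos : 0 < lam := by nlinarith
  refine ⟨y, lam, by omega, ?_⟩
  ext i j
  have h1 : lam' * X i j = lam' * (lam * (y i * y j)) := by
    have hxi := hy i (Finset.mem_univ i)
    have hxj := hy j (Finset.mem_univ j)
    calc lam' * X i j = x i * x j := hkey i j
      _ = (d * y i) * (d * y j) := by rw [← hxi, ← hxj]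
      _ = (d * d) * (y i * y j) := by ring
      _ = lam' * (lam * (y i * y j)) := by rw [hlam]; ring
  have h2 := mul_left_cancel₀ hdne h1
  simpa [Matrix.smul_apply, Matrix.vecMulVec_apply, smul_eq_mul] using h2
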